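/- arXiv:1506.07381 — 2 statements merged into one kernel-verified Lean document; each statement's English description precedes it below -/
import Mathlib

section
/- Let g_x, g_v be real numbers and ρ_{x,j}, ρ_{v,j} (j = −2,…,2) real coefficients with ρ_{x,0} = ρ_{v,0} = 1 and Σ_{j=-2}^{2} ρ_{x,j} = Σ_{j=-2}^{2} ρ_{v,j} = 0. Define λ_x(φ) = g_x·Σ_{j=-2}^{2} ρ_{x,j} e^{iφj}, λ_v(φ) = g_v·Σ_{j=-2}^{2} ρ_{v,j} e^{iφj}, α_{x,1} = ρ_{x,1} + ρ_{x,−1}, α_{v,1} = ρ_{v,1} + ρ_{v,−1}, β_{x,1} = ρ_{x,1} − ρ_{x,−1}, β_{x,2} = ρ_{x,2} − ρ_{x,−2}, β_{v,1} = ρ_{v,1} − ρ_{v,−1}, β_{v,2} = ρ_{v,2} − ρ_{v,−2}, s = β_{v,1} + 2β_{v,2}, and D = g_v²·s² − 2g_x·(4 + 3α_{x,1}). Assume β_{x,1} + 2β_{x,2} = 0 and D > 0. Then there exist ε > 0 and functions ν_+, ν_− : (−ε, ε) → ℂ such that for each φ ∈ (−ε, ε) and each sign choice ±, ν_±(φ)²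 − λ_v(φ)·ν_±(φ) − λ_x(φ) = 0, and as φ → 0: ν_±(φ) = (iφ/2)·(g_v·s ± √D) + (φ²/4)·[g_v·(4 + 3α_{v,1}) ± (g_v²·s·(4 + 3α_{v,1}) + 2g_x·β_{x,1})/√D] + o(φ²). -/
open Asymptotics Complex Filter
lemma exp_taylor3 (c : ℂ) :
    (fun φ : ℝ => Complex.exp (Complex.I * φ * c) -
      (1 + Complex.I * φ * c + (Complex.I * φ * c)^2/2 + (Complex.I * φ * c)^3/6))
      =O[nhds (0:ℝ)] (fun φ : ℝ => φ^4) := by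
  have hc : (0:ℝ) < ‖c‖ + 1 := by positivity
  rw [Asymptotics.isBigO_iff]
  refine ⟨(‖c‖ + 1)^4 * (5 * ((24:ℝ) * 4)⁻¹), ?_⟩
  have hten : Filter.Tendsto (fun φ : ℝ => |φ| * (‖c‖ + 1)) (nhds 0) (nhds 0) := by
    have hcont : Continuous fun x:ℝ => |x| * (‖c‖ + 1) := by fun_prop
    simpa using hcont.tendsto (0:ℝ)
  have hev : ∀ᶠ φ : ℝ in nhds 0, |φ| * (‖c‖ + 1) ≤ 1 := by
    filter_upwards [hten.eventually (ge_mem_nhds (by norm_num : (0:ℝ) < 1))] with φ h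
    exact h
  filter_upwards [hev] with φ h1
  have habs : ‖Complex.I * φ * c‖ ≤ |φ| * (‖c‖ + 1) := by
    simp only [norm_mul, Complex.norm_I, Complex.norm_real, Real.norm_eq_abs, one_mul]
    exact mul_le_mul_of_nonneg_left (by linarith [norm_nonneg c]) (abs_nonneg φ)
  have hb := Complex.exp_bound (x := Complex.I * φ * c) (le_trans habs h1) (by norm_num : 0 < 4)
  have hsum : ∑ m ∈ Finset.range 4, (Complex.I * φ * c) ^ m / (m.factorial : ℂ) =
      1 + Complex.I * φ * c + (Complex.I * φ * c)^2/2 + (Complex.I * φ * c)^3/6 := by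
    simp [Finset.sum_range_succ, Nat.factorial]
  rw [hsum] at hb
  calc ‖Complex.exp (Complex.I * φ * c) -
        (1 + Complex.I * φ * c + (Complex.I * φ * c)^2/2 + (Complex.I * φ * c)^3/6)‖
      ≤ ‖Complex.I * φ * c‖ ^ 4 * ((5:ℝ) * ((Nat.factorial 4 * 4 : ℝ))⁻¹) := by
        simpa using hb
    _ ≤ (|φ| * (‖c‖ + 1)) ^ 4 * ((5:ℝ) * ((24:ℝ) * 4)⁻¹) := by
        norm_num [Nat.factorial]
        gcongr
        linarith [norm_nonneg c]
    _ ≤ (‖c‖ + 1)^4 * (5 * ((24:ℝ) * 4)⁻¹) * ‖φ^4‖ := by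
        rw [mul_pow]
        have h4 : ‖φ^4‖ = |φ|^4 := by
          rw [Real.norm_eq_abs, _root_.abs_pow]
        rw [h4]
        ring_nf
        exact le_refl _
noncomputable def lam (g : ℝ) (ρ : ℤ → ℝ) (φ : ℝ) : ℂ :=
  (g : ℂ) * ∑ j ∈ Finset.Icc (-2 : ℤ) 2,
    (ρ j : ℂ) * Complex.exp (Complex.I * (φ : ℂ) * (j : ℂ))

lemma sum_expand {M : Type*} [AddCommMonoid M] (f : ℤ → M) :
    ∑ j ∈ Finset.Icc (-2:ℤ) 2, f j = f (-2) + f (-1) + f 0 + f 1 + f 2 := by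
  rw [show (Finset.Icc (-2:ℤ) 2) = {-2, -1, 0, 1, 2} from by decide]
  simp [Finset.sum_insert, add_assoc]

lemma lam_eq (g : ℝ) (ρ : ℤ → ℝ) (φ : ℝ) :
    lam g ρ φ = (g:ℂ) * ((ρ (-2) : ℂ) * Complex.exp (Complex.I * φ * (-2))
      + (ρ (-1) : ℂ) * Complex.exp (Complex.I * φ * (-1))
      + (ρ 0 : ℂ) * Complex.exp (Complex.I * φ * 0)
      + (ρ 1 : ℂ) * Complex.exp (Complex.I * φ * 1)
      + (ρ 2 : ℂ) * Complex.exp (Complex.I * φ * 2)) := by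
  rw [lam, sum_expand (fun j => (ρ j : ℂ) * Complex.exp (Complex.I * φ * (j:ℂ)))]
  norm_num

lemma lam_taylor (g : ℝ) (ρ : ℤ → ℝ) :
    (fun φ : ℝ => lam g ρ φ -
      (((g * (ρ (-2) + ρ (-1) + ρ 0 + ρ 1 + ρ 2) : ℝ) : ℂ)
        + Complex.I * φ * ((g * (-2*ρ (-2) - ρ (-1) + ρ 1 + 2*ρ 2) : ℝ) : ℂ)
        - (φ:ℂ)^2 * ((g * (4*ρ (-2) + ρ (-1) + ρ 1 + 4*ρ 2) : ℝ) : ℂ) / 2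
        - Complex.I * (φ:ℂ)^3 * ((g * (-8*ρ (-2) - ρ (-1) + ρ 1 + 8*ρ 2) : ℝ) : ℂ) / 6))
      =O[nhds (0:ℝ)] (fun φ : ℝ => φ^4) := by
  have key : ∀ φ : ℝ, lam g ρ φ -
      (((g * (ρ (-2) + ρ (-1) + ρ 0 + ρ 1 + ρ 2) : ℝ) : ℂ)
        + Complex.I * φ * ((g * (-2*ρ (-2) - ρ (-1) + ρ 1 + 2*ρ 2) : ℝ) : ℂ)
        - (φ:ℂ)^2 * ((g * (4*ρ (-2) + ρ (-1) + ρ 1 + 4*ρ 2) : ℝ) : ℂ) / 2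
        - Complex.I * (φ:ℂ)^3 * ((g * (-8*ρ (-2) - ρ (-1) + ρ 1 + 8*ρ 2) : ℝ) : ℂ) / 6)
      = (g:ℂ) * ((ρ (-2) : ℂ) * (Complex.exp (Complex.I * φ * (-2)) - (1 + Complex.I * φ * (-2) + (Complex.I * φ * (-2))^2/2 + (Complex.I * φ * (-2))^3/6))
        + (ρ (-1) : ℂ) * (Complex.exp (Complex.I * φ * (-1)) - (1 + Complex.I * φ * (-1) + (Complex.I * φ * (-1))^2/2 + (Complex.I * φ * (-1))^3/6))
        + (ρ 0 : ℂ) * (Complex.exp (Complex.I * φ * 0) - (1 + Complex.I * φ * 0 + (Complex.I * φ * 0)^2/2 + (Complex.I * φ * 0)^3/6))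
        + (ρ 1 : ℂ) * (Complex.exp (Complex.I * φ * 1) - (1 + Complex.I * φ * 1 + (Complex.I * φ * 1)^2/2 + (Complex.I * φ * 1)^3/6))
        + (ρ 2 : ℂ) * (Complex.exp (Complex.I * φ * 2) - (1 + Complex.I * φ * 2 + (Complex.I * φ * 2)^2/2 + (Complex.I * φ * 2)^3/6))) := by
    intro φ
    rw [lam_eq]
    push_cast
    linear_combination ((φ:ℂ)^2/2 * ((g:ℂ) * (4*(ρ (-2):ℂ) + (ρ (-1):ℂ) + (ρ 1:ℂ) + 4*(ρ 2:ℂ)))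
      + Complex.I*(φ:ℂ)^3/6 * ((g:ℂ) * (-8*(ρ (-2):ℂ) - (ρ (-1):ℂ) + (ρ 1:ℂ) + 8*(ρ 2:ℂ)))) * Complex.I_sq
  have E := fun (c r : ℂ) => (exp_taylor3 c).const_mul_left r
  have big := ((((((E (-2) (ρ (-2):ℂ)).add (E (-1) (ρ (-1):ℂ))).add (E 0 (ρ 0:ℂ))).add (E 1 (ρ 1:ℂ))).add (E 2 (ρ 2:ℂ))).const_mul_left ((g:ℝ):ℂ))
  exact big.congr' (Filter.Eventually.of_forall fun φ => (key φ).symm) (Filter.Eventually.of_forall fun φ => rfl)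

lemma castpow_isBigO (l : Filter ℝ) (n : ℕ) :
    (fun φ:ℝ => ((φ:ℂ))^n) =O[l] (fun φ:ℝ => φ^n) :=
  Asymptotics.isBigO_of_le _ (fun φ => by
    simp [norm_pow, Complex.norm_real])

lemma pow_isBigO_pow {m n : ℕ} (h : m ≤ n) :
    (fun φ:ℝ => φ^n) =O[nhds (0:ℝ)] (fun φ:ℝ => φ^m) := by
  rw [Asymptotics.isBigO_iff]
  refine ⟨1, ?_⟩
  have hb : ∀ᶠ φ:ℝ in nhds 0, |φ| ≤ 1 := by
    filter_upwards [Metric.ball_mem_nhds (0:ℝ) one_pos] with φ hφ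
    rw [Metric.mem_ball, Real.dist_eq, sub_zero] at hφ
    exact hφ.le
  filter_upwards [hb] with φ hφ
  simp only [Real.norm_eq_abs, _root_.abs_pow, one_mul]
  exact pow_le_pow_of_le_one (abs_nonneg φ) hφ h

lemma hasDeriv_explog : HasDerivAt (fun z:ℂ => Complex.exp (Complex.log z / 2)) (1/2 : ℂ) 1 := by
  have h1 : HasDerivAt Complex.log ((1:ℂ)⁻¹) 1 := Complex.hasDerivAt_log Complex.one_mem_slitPlane
  have h2 := (h1.div_const 2).cexp
  norm_num [Complex.log_one] at h2
  exact h2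

lemma main_aux (gx gv : ℝ) (ρx ρv : ℤ → ℝ) (a b bx cx K D : ℝ)
    (hD0 : 0 < D)
    (hDdef : D = a^2 - 4*bx)
    (hKdef : K = 2*a*b + 4*cx)
    (hlv0 : lam gv ρv 0 = 0)
    (hlx0 : lam gx ρx 0 = 0)
    (hEv : (fun φ : ℝ => lam gv ρv φ - (Complex.I*(φ:ℂ)*(a:ℂ) + (φ:ℂ)^2*(b:ℂ)))
      =O[nhds (0:ℝ)] (fun φ : ℝ => φ^3))
    (hEx : (fun φ : ℝ => lam gx ρx φ - ((φ:ℂ)^2*(bx:ℂ) + Complex.I*(φ:ℂ)^3*(cx:ℂ)))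
      =O[nhds (0:ℝ)] (fun φ : ℝ => φ^4)) :
    ∃ ε > 0, ∃ νp νm : ℝ → ℂ,
      (∀ φ ∈ Set.Ioo (-ε) ε, νp φ^2 - lam gv ρv φ * νp φ - lam gx ρx φ = 0) ∧
      (∀ φ ∈ Set.Ioo (-ε) ε, νm φ^2 - lam gv ρv φ * νm φ - lam gx ρx φ = 0) ∧
      (fun φ : ℝ => νp φ - (Complex.I*(φ:ℂ)/2*((a + Real.sqrt D : ℝ):ℂ)
          + (φ:ℂ)^2/4*((2*b + K/Real.sqrt D : ℝ):ℂ))) =o[nhds (0:ℝ)] (fun φ:ℝ => φ^2) ∧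
      (fun φ : ℝ => νm φ - (Complex.I*(φ:ℂ)/2*((a - Real.sqrt D : ℝ):ℂ)
          + (φ:ℂ)^2/4*((2*b - K/Real.sqrt D : ℝ):ℂ))) =o[nhds (0:ℝ)] (fun φ:ℝ => φ^2) := by
  have hsD0 : 0 < Real.sqrt D := Real.sqrt_pos.2 hD0
  set sD := Real.sqrt D with hsDdef
  have hsD2 : sD^2 = D := Real.sq_sqrt hD0.le
  have hsDne : ((sD:ℝ):ℂ) ≠ 0 := by exact_mod_cast ne_of_gt hsD0
  have hDne : ((D:ℝ):ℂ) ≠ 0 := by exact_mod_cast ne_of_gt hD0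
  have hsD2C : ((sD:ℝ):ℂ)^2 = ((D:ℝ):ℂ) := by exact_mod_cast congrArg (Complex.ofReal) hsD2
  set Δ : ℝ → ℂ := fun φ => lam gv ρv φ^2 + 4*lam gx ρx φ with hΔdef
  set u : ℝ → ℂ := fun φ => Δ φ / (-((D:ℝ):ℂ) * (φ:ℂ)^2) with hudef
  set q : ℝ → ℂ := fun φ => Complex.I*(φ:ℂ)*((sD:ℝ):ℂ) * Complex.exp (Complex.log (u φ) / 2) with hqdef
  -- the remainder of Δ
  have hGid : ∀ φ:ℝ, Δ φ + ((D:ℝ):ℂ)*(φ:ℂ)^2 - Complex.I*((K:ℝ):ℂ)*(φ:ℂ)^3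
      = (φ:ℂ)^4*((b:ℝ):ℂ)^2
        + (lam gv ρv φ - (Complex.I*(φ:ℂ)*(a:ℂ) + (φ:ℂ)^2*(b:ℂ)))
          * (2*(Complex.I*(φ:ℂ)*(a:ℂ) + (φ:ℂ)^2*(b:ℂ))
             + (lam gv ρv φ - (Complex.I*(φ:ℂ)*(a:ℂ) + (φ:ℂ)^2*(b:ℂ))))
        + 4*(lam gx ρx φ - ((φ:ℂ)^2*(bx:ℂ) + Complex.I*(φ:ℂ)^3*(cx:ℂ))) := by
    intro φ
    have hDC : ((D:ℝ):ℂ) = ((a:ℝ):ℂ)^2 - 4*((bx:ℝ):ℂ) := by exact_mod_cast congrArg Complex.ofReal hDdef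
    have hKC : ((K:ℝ):ℂ) = 2*((a:ℝ):ℂ)*((b:ℝ):ℂ) + 4*((cx:ℝ):ℂ) := by
      exact_mod_cast congrArg Complex.ofReal hKdef
    simp only [hΔdef]
    linear_combination (φ:ℂ)^2 * hDC - Complex.I*(φ:ℂ)^3*hKC
      + ((φ:ℂ)^2*(a:ℂ)^2) * (Complex.I_sq)
  have htend3 : Filter.Tendsto (fun φ:ℝ => φ^3) (nhds 0) (nhds (0:ℝ)) := by
    simpa using (continuous_pow 3).tendsto (0:ℝ)
  have hEvt : Filter.Tendsto (fun φ:ℝ => lam gv ρv φ - (Complex.I*(φ:ℂ)*(a:ℂ) + (φ:ℂ)^2*(b:ℂ)))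
      (nhds 0) (nhds 0) := hEv.trans_tendsto htend3
  have hPvt : Filter.Tendsto (fun φ:ℝ => 2*(Complex.I*(φ:ℂ)*(a:ℂ) + (φ:ℂ)^2*(b:ℂ))
      + (lam gv ρv φ - (Complex.I*(φ:ℂ)*(a:ℂ) + (φ:ℂ)^2*(b:ℂ)))) (nhds 0) (nhds 0) := by
    have hcont : Continuous (fun φ:ℝ => 2*(Complex.I*(φ:ℂ)*(a:ℂ) + (φ:ℂ)^2*(b:ℂ))) := by
      continuity
    have hc := hcont.tendsto (0:ℝ)
    norm_num at hc
    simpa using hc.add hEvt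
  have hG : (fun φ:ℝ => Δ φ + ((D:ℝ):ℂ)*(φ:ℂ)^2 - Complex.I*((K:ℝ):ℂ)*(φ:ℂ)^3)
      =o[nhds (0:ℝ)] (fun φ:ℝ => φ^3) := by
    have t1 : (fun φ:ℝ => (φ:ℂ)^4*((b:ℝ):ℂ)^2) =o[nhds (0:ℝ)] (fun φ:ℝ => φ^3) := by
      have h := (((castpow_isBigO (nhds 0) 4).trans_isLittleO
        (isLittleO_pow_pow (by norm_num : 3 < 4))).const_mul_left (((b:ℝ):ℂ)^2))
      exact h.congr_left (fun φ => by ring)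
    have t2 := hEv.mul_isLittleO ((Asymptotics.isLittleO_one_iff (F := ℝ)).2 hPvt)
    have t2' : (fun φ:ℝ => (lam gv ρv φ - (Complex.I*(φ:ℂ)*(a:ℂ) + (φ:ℂ)^2*(b:ℂ)))
        * (2*(Complex.I*(φ:ℂ)*(a:ℂ) + (φ:ℂ)^2*(b:ℂ))
           + (lam gv ρv φ - (Complex.I*(φ:ℂ)*(a:ℂ) + (φ:ℂ)^2*(b:ℂ)))))
        =o[nhds (0:ℝ)] (fun φ:ℝ => φ^3) := by
      have := t2.congr_right (fun φ => by ring : ∀ φ:ℝ, φ^3 * 1 = φ^3)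
      exact this
    have t3 := (hEx.trans_isLittleO (isLittleO_pow_pow (by norm_num : 3 < 4))).const_mul_left (4:ℂ)
    exact ((t1.add t2').add t3).congr_left (fun φ => (hGid φ).symm)
  -- nonvanishing of Δ near 0
  have hΔne : ∀ᶠ φ:ℝ in nhds 0, φ ≠ 0 → Δ φ ≠ 0 := by
    have h1 := (Asymptotics.isLittleO_iff.mp hG) one_pos
    have h2 : ∀ᶠ φ:ℝ in nhds 0, |φ| < D/(|K|+2) := by
      have := Metric.ball_mem_nhds (0:ℝ) (by positivity : (0:ℝ) < D/(|K|+2))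
      filter_upwards [this] with φ hφ
      rwa [Metric.mem_ball, Real.dist_eq, sub_zero] at hφ
    filter_upwards [h1, h2] with φ hb hsmall hφ0 hΔ0
    rw [hΔ0] at hb
    have hDn : ‖((D:ℝ):ℂ)*(φ:ℂ)^2 - Complex.I*((K:ℝ):ℂ)*(φ:ℂ)^3‖ ≥ D*φ^2 - |K| * |φ|^3 := by
      have := norm_sub_norm_le (((D:ℝ):ℂ)*(φ:ℂ)^2) (Complex.I*((K:ℝ):ℂ)*(φ:ℂ)^3)
      have e1 : ‖((D:ℝ):ℂ)*(φ:ℂ)^2‖ = D*φ^2 := by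
        simp [norm_mul, norm_pow, Complex.norm_real, abs_of_pos hD0, sq_abs]
      have e2 : ‖Complex.I*((K:ℝ):ℂ)*(φ:ℂ)^3‖ = |K| * |φ|^3 := by
        simp [norm_mul, norm_pow, Complex.norm_real]
      rw [e1, e2] at this
      linarith
    have hb' : ‖(0:ℂ) + ((D:ℝ):ℂ)*(φ:ℂ)^2 - Complex.I*((K:ℝ):ℂ)*(φ:ℂ)^3‖ ≤ 1 * ‖φ^3‖ := hb
    rw [zero_add] at hb'
    have h3 : D*φ^2 - |K| * |φ|^3 ≤ |φ|^3 := by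
      have : ‖(φ^3 : ℝ)‖ = |φ|^3 := by rw [Real.norm_eq_abs, _root_.abs_pow]
      rw [this, one_mul] at hb'
      linarith
    have hφpos : 0 < |φ| := abs_pos.2 hφ0
    have h4 : D*φ^2 ≤ (|K|+1) * |φ|^3 := by linarith
    have h5 : φ^2 = |φ|^2 := (_root_.sq_abs φ).symm
    rw [h5] at h4
    have hs : (|K|+2) * |φ| < D := by
      rw [lt_div_iff₀ (by positivity : (0:ℝ) < |K|+2)] at hsmall
      linarith
    nlinarith [mul_pos hφpos hφpos, hφpos, h4, hs, sq_nonneg (|φ|)]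
  obtain ⟨ε, hε0, hball⟩ := Metric.eventually_nhds_iff.mp hΔne
  have hq2 : ∀ φ:ℝ, dist φ (0:ℝ) < ε → q φ^2 = lam gv ρv φ^2 + 4*lam gx ρx φ := by
    intro φ hφ
    by_cases h0 : φ = 0
    · subst h0
      simp only [hqdef, hΔdef, hudef]
      norm_num [hlv0, hlx0]
    · have hΔ0 : Δ φ ≠ 0 := hball hφ h0
      have hφC : (φ:ℂ) ≠ 0 := Complex.ofReal_ne_zero.2 h0
      have hden : (-((D:ℝ):ℂ) * (φ:ℂ)^2) ≠ 0 := by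
        apply mul_ne_zero (neg_ne_zero.2 hDne) (pow_ne_zero _ hφC)
      have huu : u φ ≠ 0 := div_ne_zero hΔ0 hden
      have hexp : Complex.exp (Complex.log (u φ) / 2)^2 = u φ := by
        rw [sq, ← Complex.exp_add]
        have : Complex.log (u φ)/2 + Complex.log (u φ)/2 = Complex.log (u φ) := by ring
        rw [this, Complex.exp_log huu]
      have : q φ^2 = (Complex.I*(φ:ℂ)*((sD:ℝ):ℂ))^2 * u φ := by
        simp only [hqdef]
        rw [mul_pow, hexp]
      rw [this]
      have huval : u φ = (lam gv ρv φ^2 + 4*lam gx ρx φ) / (-((D:ℝ):ℂ) * (φ:ℂ)^2) := rfl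
      rw [huval]
      rw [mul_pow, mul_pow, Complex.I_sq, hsD2C, mul_div_assoc',
        show (-1:ℂ) * (φ:ℂ)^2 * ((D:ℝ):ℂ) = -((D:ℝ):ℂ) * (φ:ℂ)^2 by ring]
      exact mul_div_cancel_left₀ _ hden
  -- asymptotics on the punctured neighborhood
  have hA : (fun φ:ℝ => u φ - 1 + Complex.I*((K/D:ℝ):ℂ)*(φ:ℂ))
      =o[nhdsWithin (0:ℝ) {(0:ℝ)}ᶜ] (fun φ:ℝ => φ) := by
    rw [Asymptotics.isLittleO_iff]
    intro c hc
    have h1 := (Asymptotics.isLittleO_iff.mp hG) (mul_pos hc hD0)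
    filter_upwards [self_mem_nhdsWithin, nhdsWithin_le_nhds h1] with φ hφ0 hb
    have hφ0' : φ ≠ 0 := hφ0
    have hφC : (φ:ℂ) ≠ 0 := Complex.ofReal_ne_zero.2 hφ0'
    have hid : u φ - 1 + Complex.I*((K/D:ℝ):ℂ)*(φ:ℂ)
        = (Δ φ + ((D:ℝ):ℂ)*(φ:ℂ)^2 - Complex.I*((K:ℝ):ℂ)*(φ:ℂ)^3) / (-((D:ℝ):ℂ)*(φ:ℂ)^2) := by
      have huval : u φ = Δ φ / (-((D:ℝ):ℂ) * (φ:ℂ)^2) := rfl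
      rw [huval]
      push_cast
      field_simp
      ring
    rw [hid, norm_div]
    have hden : ‖-((D:ℝ):ℂ)*(φ:ℂ)^2‖ = D * φ^2 := by
      simp [norm_mul, norm_pow, Complex.norm_real, abs_of_pos hD0, _root_.sq_abs]
    rw [hden]
    have hdpos : 0 < D * φ^2 := by positivity
    rw [div_le_iff₀ hdpos]
    have h3 : ‖(φ^3:ℝ)‖ = |φ| * φ^2 := by
      rw [Real.norm_eq_abs, _root_.abs_pow, show (3:ℕ) = 1+2 from rfl, pow_add, pow_one,
        _root_.sq_abs]
    rw [h3] at hb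
    calc ‖Δ φ + ((D:ℝ):ℂ)*(φ:ℂ)^2 - Complex.I*((K:ℝ):ℂ)*(φ:ℂ)^3‖
        ≤ c * D * (|φ| * φ^2) := hb
      _ = c * ‖φ‖ * (D * φ^2) := by rw [Real.norm_eq_abs]; ring
  have hA1 : (fun φ:ℝ => u φ - 1) =O[nhdsWithin (0:ℝ) {(0:ℝ)}ᶜ] (fun φ:ℝ => φ) := by
    have ht : (fun φ:ℝ => Complex.I*((K/D:ℝ):ℂ)*(φ:ℂ))
        =O[nhdsWithin (0:ℝ) {(0:ℝ)}ᶜ] (fun φ:ℝ => φ) := by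
      have := ((castpow_isBigO (nhdsWithin (0:ℝ) {(0:ℝ)}ᶜ) 1).const_mul_left
        (Complex.I*((K/D:ℝ):ℂ)))
      refine (this.congr (fun φ => by ring) (fun φ => by rw [pow_one]))
    exact (hA.isBigO.sub ht).congr_left (fun φ => by ring)
  have hφtend : Filter.Tendsto (fun φ:ℝ => φ) (nhdsWithin (0:ℝ) {(0:ℝ)}ᶜ) (nhds (0:ℝ)) :=
    tendsto_id.mono_left nhdsWithin_le_nhds
  have hut : Filter.Tendsto u (nhdsWithin (0:ℝ) {(0:ℝ)}ᶜ) (nhds (1:ℂ)) := by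
    have h0 : Filter.Tendsto (fun φ:ℝ => u φ - 1) (nhdsWithin (0:ℝ) {(0:ℝ)}ᶜ) (nhds 0) :=
      hA1.trans_tendsto hφtend
    have := h0.add_const (1:ℂ)
    norm_num at this
    exact this
  have hB1 : (fun φ:ℝ => Complex.exp (Complex.log (u φ)/2) - 1 - (u φ - 1) * (1/2))
      =o[nhdsWithin (0:ℝ) {(0:ℝ)}ᶜ] (fun φ:ℝ => u φ - 1) := by
    have h := (hasDerivAt_iff_isLittleO.1 hasDeriv_explog).comp_tendsto hut
    simp only [Function.comp_def, Complex.log_one, zero_div, Complex.exp_zero,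
      smul_eq_mul] at h
    exact h
  have hB : (fun φ:ℝ => Complex.exp (Complex.log (u φ)/2) - 1 - (u φ - 1) * (1/2))
      =o[nhdsWithin (0:ℝ) {(0:ℝ)}ᶜ] (fun φ:ℝ => φ) := hB1.trans_isBigO hA1
  have hre : K/(2*sD) = sD*(K/D)/2 := by
    have hsDn : sD ≠ 0 := ne_of_gt hsD0
    have hDn : D ≠ 0 := ne_of_gt hD0
    field_simp
    linear_combination (-K)*hsD2
  have hqid : ∀ φ:ℝ, q φ - (Complex.I*(φ:ℂ)*((sD:ℝ):ℂ) + (φ:ℂ)^2*((K/(2*sD):ℝ):ℂ))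
      = (Complex.I*(φ:ℂ)*((sD:ℝ):ℂ))
          * (Complex.exp (Complex.log (u φ)/2) - 1 - (u φ - 1) * (1/2))
        + (Complex.I*((sD:ℝ):ℂ)*(φ:ℂ)*(1/2)) * (u φ - 1 + Complex.I*((K/D:ℝ):ℂ)*(φ:ℂ)) := by
    intro φ
    have hqval : q φ = Complex.I*(φ:ℂ)*((sD:ℝ):ℂ) * Complex.exp (Complex.log (u φ) / 2) := rfl
    rw [hqval, hre]
    push_cast
    linear_combination (-(((sD:ℝ):ℂ)*(φ:ℂ)^2*((K:ℝ):ℂ)/((D:ℝ):ℂ))/2) * Complex.I_sq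
  have hqexp : (fun φ:ℝ => q φ - (Complex.I*(φ:ℂ)*((sD:ℝ):ℂ) + (φ:ℂ)^2*((K/(2*sD):ℝ):ℂ)))
      =o[nhdsWithin (0:ℝ) {(0:ℝ)}ᶜ] (fun φ:ℝ => φ^2) := by
    have hfac : (fun φ:ℝ => Complex.I*(φ:ℂ)*((sD:ℝ):ℂ))
        =O[nhdsWithin (0:ℝ) {(0:ℝ)}ᶜ] (fun φ:ℝ => φ) := by
      have := (castpow_isBigO (nhdsWithin (0:ℝ) {(0:ℝ)}ᶜ) 1).const_mul_left
        (Complex.I*((sD:ℝ):ℂ))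
      exact this.congr (fun φ => by rw [pow_one]; ring) (fun φ => by rw [pow_one])
    have t1 := hfac.mul_isLittleO hB
    have hfac2 : (fun φ:ℝ => Complex.I*((sD:ℝ):ℂ)*(φ:ℂ)*(1/2))
        =O[nhdsWithin (0:ℝ) {(0:ℝ)}ᶜ] (fun φ:ℝ => φ) := by
      have := (castpow_isBigO (nhdsWithin (0:ℝ) {(0:ℝ)}ᶜ) 1).const_mul_left
        (Complex.I*((sD:ℝ):ℂ)*(1/2))
      exact this.congr (fun φ => by rw [pow_one]; ring) (fun φ => by rw [pow_one])
    have t2 := hfac2.mul_isLittleO hA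
    exact (t1.add t2).congr (fun φ => (hqid φ).symm) (fun φ => by ring)
  refine ⟨ε, hε0, fun φ => (lam gv ρv φ + q φ)/2, fun φ => (lam gv ρv φ - q φ)/2, ?_, ?_, ?_, ?_⟩
  · intro φ hφ
    have hd : dist φ (0:ℝ) < ε := by
      rw [Real.dist_eq, sub_zero, abs_lt]
      exact ⟨hφ.1, hφ.2⟩
    have h := hq2 φ hd
    linear_combination h / 4
  · intro φ hφ
    have hd : dist φ (0:ℝ) < ε := by
      rw [Real.dist_eq, sub_zero, abs_lt]
      exact ⟨hφ.1, hφ.2⟩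
    have h := hq2 φ hd
    linear_combination h / 4
  · have hEv2 : (fun φ:ℝ => lam gv ρv φ - (Complex.I*(φ:ℂ)*(a:ℂ) + (φ:ℂ)^2*(b:ℂ)))
        =o[nhdsWithin (0:ℝ) {(0:ℝ)}ᶜ] (fun φ:ℝ => φ^2) :=
      ((hEv.trans_isLittleO (isLittleO_pow_pow (by norm_num : 2 < 3))).mono nhdsWithin_le_nhds)
    have hid : ∀ φ:ℝ, (lam gv ρv φ + q φ)/2
          - (Complex.I*(φ:ℂ)/2*((a+sD:ℝ):ℂ) + (φ:ℂ)^2/4*((2*b + K/sD:ℝ):ℂ))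
        = (1/2:ℂ) * (lam gv ρv φ - (Complex.I*(φ:ℂ)*(a:ℂ) + (φ:ℂ)^2*(b:ℂ)))
          + (1/2:ℂ) * (q φ - (Complex.I*(φ:ℂ)*((sD:ℝ):ℂ) + (φ:ℂ)^2*((K/(2*sD):ℝ):ℂ))) := by
      intro φ
      push_cast
      ring
    have hpart := ((hEv2.const_mul_left (1/2:ℂ)).add
      (hqexp.const_mul_left (1/2:ℂ))).congr_left (fun φ => (hid φ).symm)
    rw [← nhdsNE_sup_pure (0:ℝ)]
    refine hpart.sup (Asymptotics.isLittleO_pure.2 ?_)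
    have hq0 : q 0 = 0 := by
      have : q 0 = Complex.I*((0:ℝ):ℂ)*((sD:ℝ):ℂ) * Complex.exp (Complex.log (u 0) / 2) := rfl
      rw [this]
      norm_num
    simp [hlv0, hq0]
  · have hEv2 : (fun φ:ℝ => lam gv ρv φ - (Complex.I*(φ:ℂ)*(a:ℂ) + (φ:ℂ)^2*(b:ℂ)))
        =o[nhdsWithin (0:ℝ) {(0:ℝ)}ᶜ] (fun φ:ℝ => φ^2) :=
      ((hEv.trans_isLittleO (isLittleO_pow_pow (by norm_num : 2 < 3))).mono nhdsWithin_le_nhds)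
    have hid : ∀ φ:ℝ, (lam gv ρv φ - q φ)/2
          - (Complex.I*(φ:ℂ)/2*((a-sD:ℝ):ℂ) + (φ:ℂ)^2/4*((2*b - K/sD:ℝ):ℂ))
        = (1/2:ℂ) * (lam gv ρv φ - (Complex.I*(φ:ℂ)*(a:ℂ) + (φ:ℂ)^2*(b:ℂ)))
          - (1/2:ℂ) * (q φ - (Complex.I*(φ:ℂ)*((sD:ℝ):ℂ) + (φ:ℂ)^2*((K/(2*sD):ℝ):ℂ))) := by
      intro φ
      push_cast
      ring
    have hpart := ((hEv2.const_mul_left (1/2:ℂ)).sub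
      (hqexp.const_mul_left (1/2:ℂ))).congr_left (fun φ => (hid φ).symm)
    rw [← nhdsNE_sup_pure (0:ℝ)]
    refine hpart.sup (Asymptotics.isLittleO_pure.2 ?_)
    have hq0 : q 0 = 0 := by
      have : q 0 = Complex.I*((0:ℝ):ℂ)*((sD:ℝ):ℂ) * Complex.exp (Complex.log (u 0) / 2) := rfl
      rw [this]
      norm_num
    simp [hlv0, hq0]

lemma lam_taylor2 (g : ℝ) (ρ : ℤ → ℝ) (c0 c1 c2 c3 : ℝ)
    (h0 : g * (ρ (-2) + ρ (-1) + ρ 0 + ρ 1 + ρ 2) = c0)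
    (h1 : g * (-2*ρ (-2) - ρ (-1) + ρ 1 + 2*ρ 2) = c1)
    (h2 : g * (4*ρ (-2) + ρ (-1) + ρ 1 + 4*ρ 2) = c2)
    (h3 : g * (-8*ρ (-2) - ρ (-1) + ρ 1 + 8*ρ 2) = c3) :
    (fun φ : ℝ => lam g ρ φ - (((c0:ℝ):ℂ) + Complex.I*(φ:ℂ)*((c1:ℝ):ℂ)
      - (φ:ℂ)^2*((c2:ℝ):ℂ)/2 - Complex.I*(φ:ℂ)^3*((c3:ℝ):ℂ)/6))
      =O[nhds (0:ℝ)] (fun φ : ℝ => φ^4) := by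
  subst h0 h1 h2 h3
  exact lam_taylor g ρ

/-- Proposition 1 of the paper: low-frequency expansion of the two root
branches `ν_±(φ)` of the characteristic equation `ν² − λ_v(φ)ν − λ_x(φ) = 0`,
under the assumptions `β_{x,1} + 2β_{x,2} = 0` and
`D = g_v²(β_{v,1}+2β_{v,2})² − 2g_x(4+3α_{x,1}) > 0`:
`ν_±(φ) = (iφ/2)(g_v s ± √D) + (φ²/4)[g_v(4+3α_{v,1}) ± (g_v² s (4+3α_{v,1}) + 2g_x β_{x,1})/√D] + o(φ²)`. -/
theorem low_frequency_expansion (gx gv : ℝ) (ρx ρv : ℤ → ℝ)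
    (hx0 : ρx 0 = 1) (hv0 : ρv 0 = 1)
    (hxsum : ∑ j ∈ Finset.Icc (-2 : ℤ) 2, ρx j = 0)
    (hvsum : ∑ j ∈ Finset.Icc (-2 : ℤ) 2, ρv j = 0)
    (hbx : (ρx 1 - ρx (-1)) + 2 * (ρx 2 - ρx (-2)) = 0)
    (hD : 0 < gv ^ 2 * ((ρv 1 - ρv (-1)) + 2 * (ρv 2 - ρv (-2))) ^ 2
        - 2 * gx * (4 + 3 * (ρx 1 + ρx (-1)))) :
    let ax1 : ℝ := ρx 1 + ρx (-1)
    let av1 : ℝ := ρv 1 + ρv (-1)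
    let bx1 : ℝ := ρx 1 - ρx (-1)
    let s : ℝ := (ρv 1 - ρv (-1)) + 2 * (ρv 2 - ρv (-2))
    let D : ℝ := gv ^ 2 * s ^ 2 - 2 * gx * (4 + 3 * ax1)
    ∃ ε > 0, ∃ νp νm : ℝ → ℂ,
      (∀ φ ∈ Set.Ioo (-ε) ε,
          νp φ ^ 2 - lam gv ρv φ * νp φ - lam gx ρx φ = 0) ∧
      (∀ φ ∈ Set.Ioo (-ε) ε,
          νm φ ^ 2 - lam gv ρv φ * νm φ - lam gx ρx φ = 0) ∧
      (fun φ : ℝ => νp φ -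
          (Complex.I * (φ : ℂ) / 2 * ((gv * s + Real.sqrt D : ℝ) : ℂ) +
            (φ : ℂ) ^ 2 / 4 * ((gv * (4 + 3 * av1) +
              (gv ^ 2 * s * (4 + 3 * av1) + 2 * gx * bx1) / Real.sqrt D : ℝ) : ℂ)))
        =o[nhds (0 : ℝ)] (fun φ : ℝ => φ ^ 2) ∧
      (fun φ : ℝ => νm φ -
          (Complex.I * (φ : ℂ) / 2 * ((gv * s - Real.sqrt D : ℝ) : ℂ) +
            (φ : ℂ) ^ 2 / 4 * ((gv * (4 + 3 * av1) -
              (gv ^ 2 * s * (4 + 3 * av1) + 2 * gx * bx1) / Real.sqrt D : ℝ) : ℂ)))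
        =o[nhds (0 : ℝ)] (fun φ : ℝ => φ ^ 2) := by
  intro ax1 av1 bx1 s D
  have hax1 : ax1 = ρx 1 + ρx (-1) := rfl
  have hav1 : av1 = ρv 1 + ρv (-1) := rfl
  have hbx1 : bx1 = ρx 1 - ρx (-1) := rfl
  have hs : s = (ρv 1 - ρv (-1)) + 2 * (ρv 2 - ρv (-2)) := rfl
  have hDd : D = gv ^ 2 * s ^ 2 - 2 * gx * (4 + 3 * ax1) := rfl
  rw [sum_expand] at hxsum hvsum
  have hD0 : 0 < D := by rw [hDd, hs, hax1]; exact hD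
  -- expansions
  have h0v : gv * (ρv (-2) + ρv (-1) + ρv 0 + ρv 1 + ρv 2) = 0 := by rw [hvsum]; ring
  have h1v : gv * (-2*ρv (-2) - ρv (-1) + ρv 1 + 2*ρv 2) = gv * s := by rw [hs]; ring
  have h2v : gv * (4*ρv (-2) + ρv (-1) + ρv 1 + 4*ρv 2) = -(gv*(4+3*av1)) := by
    rw [hav1]
    linear_combination 4*gv*hvsum + (-4*gv)*hv0
  have hEv : (fun φ : ℝ => lam gv ρv φ - (Complex.I*(φ:ℂ)*((gv*s:ℝ):ℂ)
      + (φ:ℂ)^2*((gv*(4+3*av1)/2 : ℝ):ℂ))) =O[nhds (0:ℝ)] (fun φ : ℝ => φ^3) := by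
    have h := lam_taylor2 gv ρv 0 (gv*s) (-(gv*(4+3*av1)))
      (gv * (-8*ρv (-2) - ρv (-1) + ρv 1 + 8*ρv 2)) h0v h1v h2v rfl
    have hcube : (fun φ:ℝ => - (Complex.I*(φ:ℂ)^3
        *((gv * (-8*ρv (-2) - ρv (-1) + ρv 1 + 8*ρv 2) : ℝ):ℂ)/6)) =O[nhds (0:ℝ)]
        (fun φ:ℝ => φ^3) := by
      have := (castpow_isBigO (nhds (0:ℝ)) 3).const_mul_left
        (-(Complex.I*((gv * (-8*ρv (-2) - ρv (-1) + ρv 1 + 8*ρv 2) : ℝ):ℂ)/6))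
      exact this.congr_left (fun φ => by ring)
    have hsum := (h.trans (pow_isBigO_pow (by norm_num : 3 ≤ 4))).add hcube
    exact hsum.congr_left (fun φ => by push_cast; ring)
  have h0x : gx * (ρx (-2) + ρx (-1) + ρx 0 + ρx 1 + ρx 2) = 0 := by rw [hxsum]; ring
  have h1x : gx * (-2*ρx (-2) - ρx (-1) + ρx 1 + 2*ρx 2) = 0 := by linear_combination gx*hbx
  have h2x : gx * (4*ρx (-2) + ρx (-1) + ρx 1 + 4*ρx 2) = -(gx*(4+3*ax1)) := by
    rw [hax1]
    linear_combination 4*gx*hxsum + (-4*gx)*hx0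
  have h3x : gx * (-8*ρx (-2) - ρx (-1) + ρx 1 + 8*ρx 2) = -(3*gx*bx1) := by
    rw [hbx1]
    linear_combination 4*gx*hbx
  have hEx : (fun φ : ℝ => lam gx ρx φ - ((φ:ℂ)^2*((gx*(4+3*ax1)/2 : ℝ):ℂ)
      + Complex.I*(φ:ℂ)^3*((gx*bx1/2 : ℝ):ℂ))) =O[nhds (0:ℝ)] (fun φ : ℝ => φ^4) := by
    have h := lam_taylor2 gx ρx 0 0 (-(gx*(4+3*ax1))) (-(3*gx*bx1)) h0x h1x h2x h3x
    exact h.congr_left (fun φ => by push_cast; ring)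
  have hlv0 : lam gv ρv 0 = 0 := by
    have hC := congrArg (Complex.ofReal) hvsum
    push_cast at hC
    rw [lam_eq]
    simp only [Complex.ofReal_zero, mul_zero, zero_mul, Complex.exp_zero, mul_one]
    linear_combination (gv:ℂ) * hC
  have hlx0 : lam gx ρx 0 = 0 := by
    have hC := congrArg (Complex.ofReal) hxsum
    push_cast at hC
    rw [lam_eq]
    simp only [Complex.ofReal_zero, mul_zero, zero_mul, Complex.exp_zero, mul_one]
    linear_combination (gx:ℂ) * hC
  obtain ⟨ε, hε, νp, νm, hr1, hr2, h3, h4⟩ := main_aux gx gv ρx ρv (gv*s) (gv*(4+3*av1)/2)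
    (gx*(4+3*ax1)/2) (gx*bx1/2) (gv^2*s*(4+3*av1) + 2*gx*bx1) D hD0
    (by rw [hDd]; ring) (by ring) hlv0 hlx0 hEv hEx
  rw [show 2*(gv*(4+3*av1)/2) = gv*(4+3*av1) from by ring] at h3 h4
  exact ⟨ε, hε, νp, νm, hr1, hr2, h3, h4⟩
end

section
/- Let g_x, g_v be real numbers and ρ_{x,j}, ρ_{v,j} (j = −2,…,2) real coefficients with ρ_{x,0} = ρ_{v,0} = 1 and Σ_{j=-2}^{2} ρ_{x,j} = Σ_{j=-2}^{2} ρ_{v,j} = 0. Define λ_x(φ) = g_x·Σ_{j=-2}^{2} ρ_{x,j} e^{iφj}, λ_v(φ) = g_v·Σ_{j=-2}^{2} ρ_{v,j} e^{iφj}, α_{x,1} = ρ_{x,1} + ρ_{x,−1}, α_{v,1} = ρ_{v,1} + ρ_{v,−1}, β_{x,1} = ρ_{x,1} − ρ_{x,−1}, β_{x,2} = ρ_{x,2} − ρ_{x,−2}, β_{v,1} = ρ_{v,1} − ρ_{v,−1}, β_{v,2} = ρ_{v,2} − ρ_{v,−2}, s = β_{v,1} + 2β_{v,2}, and D = g_v²·s²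 − 2g_x·(4 + 3α_{x,1}). Assume β_{x,1} + 2β_{x,2} = 0, D > 0, and g_v²·g_x·(4 + 3α_{v,1})²·(4 + 3α_{x,1}) + 2g_v²·g_x·s·(4 + 3α_{v,1})·β_{x,1} + 2g_x²·β_{x,1}² > 0. Then there exists ε > 0 such that for every φ with 0 < φ < ε there is a complex number ν with ν² − λ_v(φ)·ν − λ_x(φ) = 0 and Re ν > 0. -/
set_option maxHeartbeats 1000000
open Real Filter Topology

theorem lam_re (g : ℝ) (ρ : ℤ → ℝ) (φ : ℝ) : (lam g ρ φ).re
    = g * (ρ (-2) * Real.cos (2*φ) + ρ (-1) * Real.cos φ + ρ 0 + ρ 1 * Real.cos φ + ρ 2 * Real.cos (2*φ)) := by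
  have h : Finset.Icc (-2 : ℤ) 2 = {-2, -1, 0, 1, 2} := by decide
  rw [lam, h]
  have e : ∀ j : ℤ, Complex.I * (φ : ℂ) * ((j:ℤ) : ℂ) = ((j*φ : ℝ) : ℂ) * Complex.I := by
    intro j; push_cast; ring
  rw [show ({-2, -1, 0, 1, 2} : Finset ℤ) = insert (-2) (insert (-1) (insert 0 (insert 1 {2}))) from rfl]
  rw [Finset.sum_insert (by decide), Finset.sum_insert (by decide), Finset.sum_insert (by decide),
    Finset.sum_insert (by decide), Finset.sum_singleton]
  rw [e (-2), e (-1), e 0, e 1, e 2]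
  simp only [Complex.add_re, Complex.add_im, Complex.mul_re, Complex.mul_im,
    Complex.ofReal_re, Complex.ofReal_im, Complex.exp_ofReal_mul_I_re, Complex.exp_ofReal_mul_I_im]
  rw [show ((-2:ℤ):ℝ)*φ = -(2*φ) by push_cast; ring, show ((-1:ℤ):ℝ)*φ = -φ by push_cast; ring,
    show ((0:ℤ):ℝ)*φ = 0 by push_cast; ring, show ((1:ℤ):ℝ)*φ = φ by push_cast; ring,
    show ((2:ℤ):ℝ)*φ = 2*φ by push_cast; ring]
  rw [Real.cos_neg, Real.sin_neg, Real.cos_neg, Real.sin_neg, Real.cos_zero, Real.sin_zero]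
  ring

theorem lam_im (g : ℝ) (ρ : ℤ → ℝ) (φ : ℝ) : (lam g ρ φ).im
    = g * (-(ρ (-2) * Real.sin (2*φ)) - ρ (-1) * Real.sin φ + ρ 1 * Real.sin φ + ρ 2 * Real.sin (2*φ)) := by
  have h : Finset.Icc (-2 : ℤ) 2 = {-2, -1, 0, 1, 2} := by decide
  rw [lam, h]
  have e : ∀ j : ℤ, Complex.I * (φ : ℂ) * ((j:ℤ) : ℂ) = ((j*φ : ℝ) : ℂ) * Complex.I := by
    intro j; push_cast; ring
  rw [show ({-2, -1, 0, 1, 2} : Finset ℤ) = insert (-2) (insert (-1) (insert 0 (insert 1 {2}))) from rfl]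
  rw [Finset.sum_insert (by decide), Finset.sum_insert (by decide), Finset.sum_insert (by decide),
    Finset.sum_insert (by decide), Finset.sum_singleton]
  rw [e (-2), e (-1), e 0, e 1, e 2]
  simp only [Complex.add_re, Complex.add_im, Complex.mul_re, Complex.mul_im,
    Complex.ofReal_re, Complex.ofReal_im, Complex.exp_ofReal_mul_I_re, Complex.exp_ofReal_mul_I_im]
  rw [show ((-2:ℤ):ℝ)*φ = -(2*φ) by push_cast; ring, show ((-1:ℤ):ℝ)*φ = -φ by push_cast; ring,
    show ((0:ℤ):ℝ)*φ = 0 by push_cast; ring, show ((1:ℤ):ℝ)*φ = φ by push_cast; ring,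
    show ((2:ℤ):ℝ)*φ = 2*φ by push_cast; ring]
  rw [Real.cos_neg, Real.sin_neg, Real.cos_neg, Real.sin_neg, Real.cos_zero, Real.sin_zero]
  ring

/-- An explicit complex square root. -/
noncomputable def csqrt (z : ℂ) : ℂ :=
  ⟨Real.sqrt ((‖z‖ + z.re)/2),
   (if z.im < 0 then -1 else 1) * Real.sqrt ((‖z‖ - z.re)/2)⟩

theorem csqrt_re (z : ℂ) : (csqrt z).re = Real.sqrt ((‖z‖ + z.re)/2) := rfl

theorem csqrt_sq (z : ℂ) : (csqrt z)^2 = z := by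
  have h1 : 0 ≤ (‖z‖ + z.re)/2 := by
    have := abs_le.mp (Complex.abs_re_le_norm z)
    linarith [this.1]
  have h2 : 0 ≤ (‖z‖ - z.re)/2 := by
    have := (abs_le.mp (Complex.abs_re_le_norm z)).2
    linarith
  have hsq : ((‖z‖ + z.re)/2) * ((‖z‖ - z.re)/2) = z.im^2/4 := by
    have : (‖z‖)^2 = z.re^2 + z.im^2 := by
      rw [Complex.sq_norm, Complex.normSq_apply]; ring
    nlinarith [this]
  apply Complex.ext
  · simp only [pow_two, Complex.mul_re, csqrt]
    rw [Real.mul_self_sqrt h1]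
    have : ((if z.im < 0 then (-1:ℝ) else 1) * Real.sqrt ((‖z‖ - z.re)/2)) *
        ((if z.im < 0 then (-1:ℝ) else 1) * Real.sqrt ((‖z‖ - z.re)/2))
        = Real.sqrt ((‖z‖ - z.re)/2) * Real.sqrt ((‖z‖ - z.re)/2) := by
      split <;> ring
    rw [this, Real.mul_self_sqrt h2]; ring
  · simp only [pow_two, Complex.mul_im, csqrt]
    have key : Real.sqrt ((‖z‖ + z.re)/2) * Real.sqrt ((‖z‖ - z.re)/2)
        = |z.im| / 2 := by
      rw [← Real.sqrt_mul h1, hsq]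
      rw [show z.im^2/4 = (|z.im|/2)^2 by rw [div_pow, sq_abs]; norm_num,
        Real.sqrt_sq (by positivity)]
    rcases lt_or_ge z.im 0 with h | h
    · simp only [if_pos h]
      rw [show Real.sqrt ((‖z‖ + z.re)/2) * (-1 * Real.sqrt ((‖z‖ - z.re)/2))
          + -1 * Real.sqrt ((‖z‖ - z.re)/2) * Real.sqrt ((‖z‖ + z.re)/2)
          = -2 * (Real.sqrt ((‖z‖ + z.re)/2) * Real.sqrt ((‖z‖ - z.re)/2)) by ring,
        key, abs_of_neg h]
      ring
    · simp only [if_neg (not_lt.mpr h)]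
      rw [show Real.sqrt ((‖z‖ + z.re)/2) * (1 * Real.sqrt ((‖z‖ - z.re)/2))
          + 1 * Real.sqrt ((‖z‖ - z.re)/2) * Real.sqrt ((‖z‖ + z.re)/2)
          = 2 * (Real.sqrt ((‖z‖ + z.re)/2) * Real.sqrt ((‖z‖ - z.re)/2)) by ring,
        key, abs_of_nonneg h]
      ring

lemma tendsto_pow_zero (n : ℕ) (hn : 0 < n) :
    Tendsto (fun φ : ℝ => φ^n) (nhdsWithin 0 (Set.Ioi 0)) (nhds 0) := by
  have : Tendsto (fun φ : ℝ => φ^n) (nhds 0) (nhds 0) := by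
    have := (continuous_pow n (M := ℝ)).tendsto 0
    simpa [zero_pow hn.ne'] using this
  exact this.mono_left nhdsWithin_le_nhds

lemma pow_squeeze (f : ℝ → ℝ) (C : ℝ) (n : ℕ) (hn : 0 < n)
    (h : ∀ᶠ φ in nhdsWithin (0:ℝ) (Set.Ioi 0), |f φ| ≤ C * φ^n) :
    Tendsto f (nhdsWithin 0 (Set.Ioi 0)) (nhds 0) := by
  apply squeeze_zero_norm' h
  have := (tendsto_pow_zero n hn).const_mul C
  simpa using this

lemma small_mem (δ : ℝ) (hδ : 0 < δ) :
    ∀ᶠ φ in nhdsWithin (0:ℝ) (Set.Ioi 0), 0 < φ ∧ φ < δ := by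
  have h1 : ∀ᶠ φ in nhdsWithin (0:ℝ) (Set.Ioi 0), φ ∈ Set.Ioo 0 δ :=
    Ioo_mem_nhdsGT hδ
  exact h1.mono fun φ h => ⟨h.1, h.2⟩

lemma abs_arg_le (a φ : ℝ) (hφ0 : 0 < φ) (hφδ : φ < min 1 (1/(1+|a|))) : |a*φ| ≤ 1 := by
  rw [abs_mul, abs_of_pos hφ0]
  have h2 : φ ≤ 1/(1+|a|) := le_of_lt (lt_of_lt_of_le hφδ (min_le_right _ _))
  have h4 : |a| * φ ≤ |a| * (1/(1+|a|)) := mul_le_mul_of_nonneg_left h2 (abs_nonneg a)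
  have h3 : |a| * (1/(1+|a|)) ≤ 1 := by
    rw [mul_one_div, div_le_one (by positivity)]
    linarith [abs_nonneg a]
  linarith

lemma cos_err (a : ℝ) :
    Tendsto (fun φ : ℝ => (Real.cos (a*φ) - 1)/φ^2) (nhdsWithin 0 (Set.Ioi 0))
      (nhds (-(a^2)/2)) := by
  have key : Tendsto (fun φ : ℝ => (Real.cos (a*φ) - 1)/φ^2 - (-(a^2)/2))
      (nhdsWithin 0 (Set.Ioi 0)) (nhds 0) := by
    apply pow_squeeze _ ((5/96) * a^4) 2 (by norm_num)
    filter_upwards [small_mem (min 1 (1/(1+|a|))) (by positivity)] with φ ⟨hφ0, hφδ⟩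
    have hφ1 : φ ≤ 1 := le_of_lt (lt_of_lt_of_le hφδ (min_le_left _ _))
    have hb := Real.cos_bound (abs_arg_le a φ hφ0 hφδ)
    have heq : (Real.cos (a*φ) - 1)/φ^2 - (-(a^2)/2)
        = (Real.cos (a*φ) - (1 - (a*φ)^2/2))/φ^2 := by
      field_simp; ring
    rw [heq, abs_div, abs_of_pos (by positivity : (0:ℝ) < φ^2),
      div_le_iff₀ (by positivity)]
    have h5 : |a*φ|^4 * (5/96) ≤ 5/96 * a^4 * φ^2 * φ^2 := by
      rw [abs_mul, abs_of_pos hφ0, mul_pow, pow_abs,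
        abs_of_nonneg (by positivity : (0:ℝ) ≤ a^4)]
      nlinarith [pow_pos hφ0 4]
    linarith
  have h := key.add_const (-(a^2)/2)
  rw [zero_add] at h
  exact h.congr (fun φ => by ring)

lemma sin_err (a : ℝ) :
    Tendsto (fun φ : ℝ => (Real.sin (a*φ) - a*φ)/φ^3) (nhdsWithin 0 (Set.Ioi 0))
      (nhds (-(a^3)/6)) := by
  have key : Tendsto (fun φ : ℝ => (Real.sin (a*φ) - a*φ)/φ^3 - (-(a^3)/6))
      (nhdsWithin 0 (Set.Ioi 0)) (nhds 0) := by
    apply pow_squeeze _ ((5/96) * a^4) 1 (by norm_num)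
    filter_upwards [small_mem (min 1 (1/(1+|a|))) (by positivity)] with φ ⟨hφ0, hφδ⟩
    have hb := Real.sin_bound (abs_arg_le a φ hφ0 hφδ)
    have heq : (Real.sin (a*φ) - a*φ)/φ^3 - (-(a^3)/6)
        = (Real.sin (a*φ) - (a*φ - (a*φ)^3/6))/φ^3 := by
      field_simp; ring
    rw [heq, abs_div, abs_of_pos (by positivity : (0:ℝ) < φ^3),
      div_le_iff₀ (by positivity)]
    have h5 : |a*φ|^4 * (5/96) ≤ 5/96 * a^4 * φ^1 * φ^3 := by
      rw [abs_mul, abs_of_pos hφ0, mul_pow, pow_abs,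
        abs_of_nonneg (by positivity : (0:ℝ) ≤ a^4)]
      nlinarith [pow_pos hφ0 4]
    have h6 : |a*φ|^5/100 ≤ |a*φ|^4 * (5/96) := by
      have hp : |a*φ|^5 = |a*φ|^4*|a*φ| := pow_succ _ _
      nlinarith [mul_le_mul_of_nonneg_left (abs_arg_le a φ hφ0 hφδ) (pow_nonneg (abs_nonneg (a*φ)) 4), pow_nonneg (abs_nonneg (a*φ)) 4]
    linarith
  have h := key.add_const (-(a^3)/6)
  rw [zero_add] at h
  exact h.congr (fun φ => by ring)

lemma sin_div (a : ℝ) :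
    Tendsto (fun φ : ℝ => Real.sin (a*φ)/φ) (nhdsWithin 0 (Set.Ioi 0)) (nhds a) := by
  have h1 : Tendsto (fun φ : ℝ => ((Real.sin (a*φ) - a*φ)/φ^3) * φ^2 + a)
      (nhdsWithin 0 (Set.Ioi 0)) (nhds a) := by
    have := ((sin_err a).mul (tendsto_pow_zero 2 (by norm_num))).add_const a
    simpa using this
  apply h1.congr'
  filter_upwards [small_mem 1 one_pos] with φ ⟨hφ0, _⟩
  field_simp
  ring

/-- Corollary 1(ii) of the paper: if `β_{x,1} + 2β_{x,2} = 0`,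
`D = g_v²s² − 2g_x(4+3α_{x,1}) > 0` (with `s = β_{v,1}+2β_{v,2}`), and
`g_v²g_x(4+3α_{v,1})²(4+3α_{x,1}) + 2g_v²g_x s(4+3α_{v,1})β_{x,1} + 2g_x²β_{x,1}² > 0`,
then for all sufficiently small `φ > 0` the characteristic equation has a
root with positive real part. -/
theorem unstable_of_second_order_pos (gx gv : ℝ) (ρx ρv : ℤ → ℝ)
    (hx0 : ρx 0 = 1) (hv0 : ρv 0 = 1)
    (hxsum : ∑ j ∈ Finset.Icc (-2 : ℤ) 2, ρx j = 0)
    (hvsum : ∑ j ∈ Finset.Icc (-2 : ℤ) 2, ρv j = 0)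
    (hbx : (ρx 1 - ρx (-1)) + 2 * (ρx 2 - ρx (-2)) = 0)
    (hD : 0 < gv ^ 2 * ((ρv 1 - ρv (-1)) + 2 * (ρv 2 - ρv (-2))) ^ 2
        - 2 * gx * (4 + 3 * (ρx 1 + ρx (-1))))
    (hsec : 0 < gv ^ 2 * gx * (4 + 3 * (ρv 1 + ρv (-1))) ^ 2
          * (4 + 3 * (ρx 1 + ρx (-1)))
        + 2 * gv ^ 2 * gx * ((ρv 1 - ρv (-1)) + 2 * (ρv 2 - ρv (-2)))
          * (4 + 3 * (ρv 1 + ρv (-1))) * (ρx 1 - ρx (-1))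
        + 2 * gx ^ 2 * (ρx 1 - ρx (-1)) ^ 2) :
    ∃ ε > 0, ∀ φ : ℝ, 0 < φ → φ < ε →
      ∃ ν : ℂ, ν ^ 2 - lam gv ρv φ * ν - lam gx ρx φ = 0 ∧ 0 < ν.re := by
  have hIcc : Finset.Icc (-2 : ℤ) 2 = {-2, -1, 0, 1, 2} := by decide
  have expand : ∀ ρ : ℤ → ℝ, ∑ j ∈ Finset.Icc (-2:ℤ) 2, ρ j
      = ρ (-2) + ρ (-1) + ρ 0 + ρ 1 + ρ 2 := by
    intro ρ
    rw [hIcc,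
      show ({-2, -1, 0, 1, 2} : Finset ℤ) = insert (-2) (insert (-1) (insert 0 (insert 1 {2}))) from rfl,
      Finset.sum_insert (by decide), Finset.sum_insert (by decide), Finset.sum_insert (by decide),
      Finset.sum_insert (by decide), Finset.sum_singleton]
    ring
  rw [expand ρx, hx0] at hxsum
  rw [expand ρv, hv0] at hvsum
  -- opaque abbreviations
  obtain ⟨Av, hAv⟩ : ∃ a : ℝ, a = 4 + 3*(ρv 1 + ρv (-1)) := ⟨_, rfl⟩
  obtain ⟨Ax, hAx⟩ : ∃ a : ℝ, a = 4 + 3*(ρx 1 + ρx (-1)) := ⟨_, rfl⟩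
  obtain ⟨sv, hsv⟩ : ∃ a : ℝ, a = (ρv 1 - ρv (-1)) + 2*(ρv 2 - ρv (-2)) := ⟨_, rfl⟩
  obtain ⟨bx, hbxd⟩ : ∃ a : ℝ, a = ρx 1 - ρx (-1) := ⟨_, rfl⟩
  obtain ⟨D, hDdef⟩ : ∃ a : ℝ, a = gv^2*sv^2 - 2*gx*Ax := ⟨_, rfl⟩
  obtain ⟨Y3, hY3⟩ : ∃ a : ℝ, a = gv^2*sv*Av + 2*gx*bx := ⟨_, rfl⟩
  have hDpos : 0 < D := by rw [hDdef, hsv, hAx]; linarith [hD]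
  have hSD : 0 < Real.sqrt D := Real.sqrt_pos.mpr hDpos
  have hSDsq : Real.sqrt D ^ 2 = D := Real.sq_sqrt hDpos.le
  set L := nhdsWithin (0:ℝ) (Set.Ioi 0) with hLdef
  -- limits of λ components
  have h1 : Tendsto (fun φ => (lam gv ρv φ).re/φ^2) L (nhds (gv*Av/2)) := by
    have base := ((cos_err 1).const_mul (gv*(ρv 1 + ρv (-1)))).add
      ((cos_err 2).const_mul (gv*(ρv 2 + ρv (-2))))
    have hval : gv*(ρv 1 + ρv (-1))*(-((1:ℝ)^2)/2) + gv*(ρv 2 + ρv (-2))*(-((2:ℝ)^2)/2)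
        = gv*Av/2 := by rw [hAv]; linear_combination (-2*gv)*hvsum
    rw [hval] at base
    apply base.congr
    intro φ
    rw [lam_re, hv0, one_mul]
    linear_combination (-(gv)/φ^2)*hvsum
  have h2 : Tendsto (fun φ => (lam gv ρv φ).im/φ) L (nhds (gv*sv)) := by
    have base := ((sin_div 1).const_mul (gv*(ρv 1 - ρv (-1)))).add
      ((sin_div 2).const_mul (gv*(ρv 2 - ρv (-2))))
    have hval : gv*(ρv 1 - ρv (-1))*(1:ℝ) + gv*(ρv 2 - ρv (-2))*(2:ℝ) = gv*sv := by
      rw [hsv]; ring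
    rw [hval] at base
    apply base.congr
    intro φ
    rw [lam_im, one_mul]
    ring
  have h3 : Tendsto (fun φ => (lam gx ρx φ).re/φ^2) L (nhds (gx*Ax/2)) := by
    have base := ((cos_err 1).const_mul (gx*(ρx 1 + ρx (-1)))).add
      ((cos_err 2).const_mul (gx*(ρx 2 + ρx (-2))))
    have hval : gx*(ρx 1 + ρx (-1))*(-((1:ℝ)^2)/2) + gx*(ρx 2 + ρx (-2))*(-((2:ℝ)^2)/2)
        = gx*Ax/2 := by rw [hAx]; linear_combination (-2*gx)*hxsum
    rw [hval] at base
    apply base.congr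
    intro φ
    rw [lam_re, hx0, one_mul]
    linear_combination (-(gx)/φ^2)*hxsum
  have h4 : Tendsto (fun φ => (lam gx ρx φ).im/φ^3) L (nhds (gx*bx/2)) := by
    have base := ((sin_err 1).const_mul (gx*(ρx 1 - ρx (-1)))).add
      ((sin_err 2).const_mul (gx*(ρx 2 - ρx (-2))))
    have hval : gx*(ρx 1 - ρx (-1))*(-((1:ℝ)^3)/6) + gx*(ρx 2 - ρx (-2))*(-((2:ℝ)^3)/6)
        = gx*bx/2 := by rw [hbxd]; linear_combination (-(2/3)*gx)*hbx
    rw [hval] at base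
    apply base.congr
    intro φ
    rw [lam_im, one_mul]
    have e1 : gx * (-(ρx (-2) * Real.sin (2*φ)) - ρx (-1) * Real.sin φ + ρx 1 * Real.sin φ
        + ρx 2 * Real.sin (2*φ))
        = gx*(ρx 1 - ρx (-1))*(Real.sin φ - φ) + gx*(ρx 2 - ρx (-2))*(Real.sin (2*φ) - 2*φ) := by
      linear_combination (gx*φ)*hbx
    rw [e1]
    ring
  -- the discriminant
  obtain ⟨Q, hQ⟩ : ∃ f : ℝ → ℂ, f = fun φ => (lam gv ρv φ)^2 + 4*lam gx ρx φ := ⟨_, rfl⟩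
  obtain ⟨X, hX⟩ : ∃ f : ℝ → ℝ,
    f = fun φ => (lam gv ρv φ).re^2 - (lam gv ρv φ).im^2 + 4*(lam gx ρx φ).re := ⟨_, rfl⟩
  obtain ⟨Y, hYd⟩ : ∃ f : ℝ → ℝ,
    f = fun φ => 2*(lam gv ρv φ).re*(lam gv ρv φ).im + 4*(lam gx ρx φ).im := ⟨_, rfl⟩
  have hQre : ∀ φ, (Q φ).re = X φ := by
    intro φ
    simp only [hQ, hX]
    simp [pow_two, Complex.mul_re]
    try ring
  have hQim : ∀ φ, (Q φ).im = Y φ := by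
    intro φ
    simp only [hQ, hYd]
    simp [pow_two, Complex.mul_im]
    try ring
  have hQsq : ∀ φ, ‖(Q φ)‖^2 = X φ^2 + Y φ^2 := by
    intro φ
    rw [Complex.sq_norm, Complex.normSq_apply, hQre, hQim]
    ring
  have hφpos : ∀ᶠ φ in L, 0 < φ := (small_mem 1 one_pos).mono fun φ h => h.1
  -- limit of X/φ²
  have hXlim : Tendsto (fun φ => X φ/φ^2) L (nhds (-D)) := by
    have base := (((h1.mul h1).mul (tendsto_pow_zero 2 (by norm_num))).sub (h2.mul h2)).add
      (h3.const_mul 4)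
    have hval : (gv*Av/2*(gv*Av/2)*0 - gv*sv*(gv*sv)) + 4*(gx*Ax/2) = -D := by
      rw [hDdef]; ring
    rw [hval] at base
    apply base.congr'
    filter_upwards [hφpos] with φ hφ0
    simp only [hX]
    field_simp
  -- limit of Y/φ³
  have hYlim : Tendsto (fun φ => Y φ/φ^3) L (nhds Y3) := by
    have base := ((h1.mul h2).const_mul 2).add (h4.const_mul 4)
    have hval : 2*(gv*Av/2*(gv*sv)) + 4*(gx*bx/2) = Y3 := by rw [hY3]; ring
    rw [hval] at base
    apply base.congr'
    filter_upwards [hφpos] with φ hφ0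
    simp only [hYd]
    field_simp
  -- limit of |Q|/φ²
  have habs : Tendsto (fun φ => ‖(Q φ)‖/φ^2) L (nhds D) := by
    have inner : Tendsto (fun φ => (X φ/φ^2)^2 + (Y φ/φ^3)^2*φ^2) L (nhds (D^2)) := by
      have base := ((hXlim.mul hXlim)).add
        ((hYlim.mul hYlim).mul (tendsto_pow_zero 2 (by norm_num)))
      have hval : (-D)*(-D) + Y3*Y3*0 = D^2 := by ring
      rw [hval] at base
      apply base.congr
      intro φ; ring
    have comp := (Real.continuous_sqrt.tendsto _).comp inner
    rw [Real.sqrt_sq hDpos.le] at comp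
    apply comp.congr'
    filter_upwards [hφpos] with φ hφ0
    simp only [Function.comp]
    rw [Complex.norm_def, Complex.normSq_apply, hQre, hQim]
    rw [show X φ * X φ + Y φ * Y φ = ((X φ/φ^2)^2 + (Y φ/φ^3)^2*φ^2)*(φ^2)^2 by
      field_simp]
    rw [Real.sqrt_mul (by positivity), Real.sqrt_sq (by positivity)]
    field_simp
  -- eventually X < 0
  have hXneg : ∀ᶠ φ in L, X φ < 0 := by
    have hev : ∀ᶠ φ in L, X φ/φ^2 < 0 := hXlim.eventually (eventually_lt_nhds (by linarith))
    filter_upwards [hev, hφpos] with φ h hφ0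
    by_contra hcon
    push_neg at hcon
    exact absurd (div_nonneg hcon (by positivity)) (not_le.mpr h)
  -- limit of (|Q|+X)/φ⁴
  have hR : Tendsto (fun φ => (‖(Q φ)‖ + X φ)/φ^4) L (nhds (Y3^2/(2*D))) := by
    have denom : Tendsto (fun φ => ‖(Q φ)‖/φ^2 - X φ/φ^2) L (nhds (D - -D)) :=
      habs.sub hXlim
    have base := (hYlim.mul hYlim).div denom (by intro h; rw [sub_neg_eq_add] at h; linarith)
    have hval : Y3*Y3/(D - -D) = Y3^2/(2*D) := by ring_nf
    rw [hval] at base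
    apply base.congr'
    filter_upwards [hφpos, hXneg] with φ hφ0 hXn
    have habs0 : (0:ℝ) ≤ ‖(Q φ)‖ := norm_nonneg _
    have hden : 0 < ‖(Q φ)‖ - X φ := by linarith
    have hkey : (‖(Q φ)‖ + X φ) * (‖(Q φ)‖ - X φ) = Y φ^2 := by
      have := hQsq φ
      nlinarith [this]
    have hφne : φ ≠ 0 := ne_of_gt hφ0
    have hdenne : ‖(Q φ)‖ - X φ ≠ 0 := ne_of_gt hden
    simp only [Pi.div_apply]
    rw [div_sub_div_same]
    rw [eq_comm, div_eq_div_iff (by positivity) (by positivity)]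
    field_simp
    linear_combination hQsq φ
  -- limit of Re csqrt(Q)/φ²
  have hwlim : Tendsto (fun φ => (csqrt (Q φ)).re/φ^2) L (nhds (|Y3|/(2*Real.sqrt D))) := by
    have inner : Tendsto (fun φ => ((‖(Q φ)‖ + X φ)/φ^4)/2) L
        (nhds ((Y3^2/(2*D))/2)) := hR.div_const 2
    have comp := (Real.continuous_sqrt.tendsto _).comp inner
    have hval : Real.sqrt ((Y3^2/(2*D))/2) = |Y3|/(2*Real.sqrt D) := by
      rw [show Y3^2/(2*D)/2 = (|Y3|/(2*Real.sqrt D))^2 by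
        rw [div_pow, sq_abs, mul_pow, hSDsq]; ring]
      exact Real.sqrt_sq (by positivity)
    rw [hval] at comp
    apply comp.congr'
    filter_upwards [hφpos] with φ hφ0
    simp only [Function.comp]
    rw [csqrt_re, hQre]
    have hnum : (0:ℝ) ≤ (‖(Q φ)‖ + X φ)/2 := by
      have h2 : |X φ| ≤ ‖(Q φ)‖ := by
        rw [← hQre]; exact Complex.abs_re_le_norm _
      linarith [(abs_le.mp h2).1]
    rw [show (‖(Q φ)‖ + X φ)/φ^4/2 = ((‖(Q φ)‖ + X φ)/2)/(φ^2)^2 by ring]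
    rw [Real.sqrt_div hnum, Real.sqrt_sq (by positivity)]
  -- positivity of the limit
  have hY3gt : |gv*Av| * Real.sqrt D < |Y3| := by
    have hsq2 : (gv*Av)^2 * D < Y3^2 := by
      rw [hY3, hDdef, hAv, hAx, hsv, hbxd]
      nlinarith [hsec]
    by_contra hcon
    push_neg at hcon
    have h0 : (0:ℝ) ≤ |gv*Av| * Real.sqrt D := by positivity
    have := mul_self_le_mul_self (abs_nonneg Y3) hcon
    rw [← sq_abs Y3] at hsq2
    have e3 : (|gv*Av| * Real.sqrt D)^2 = (gv*Av)^2*D := by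
      rw [mul_pow, sq_abs, hSDsq]
    nlinarith [e3, hsq2, this]
  have hclim : 0 < (1/2:ℝ)*(gv*Av/2 + |Y3|/(2*Real.sqrt D)) := by
    have h6 : |gv*Av|/2 < |Y3|/(2*Real.sqrt D) := by
      rw [div_lt_div_iff₀ (by norm_num) (by positivity)]
      linarith [hY3gt]
    have h7 := neg_abs_le (gv*Av)
    linarith
  -- the root candidate and its limit
  have hνlim : Tendsto (fun φ => ((((1/2:ℝ):ℂ)) * (lam gv ρv φ + csqrt (Q φ))).re/φ^2) L
      (nhds ((1/2:ℝ)*(gv*Av/2 + |Y3|/(2*Real.sqrt D)))) := by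
    have base := (h1.add hwlim).const_mul (1/2:ℝ)
    apply base.congr
    intro φ
    rw [show ((((1/2:ℝ):ℂ)) * (lam gv ρv φ + csqrt (Q φ))).re
        = (1/2:ℝ) * ((lam gv ρv φ).re + (csqrt (Q φ)).re) by
      simp [Complex.mul_re, Complex.add_re]]
    ring
  have hevpos : ∀ᶠ φ in L, 0 < ((((1/2:ℝ):ℂ)) * (lam gv ρv φ + csqrt (Q φ))).re := by
    have h8 := hνlim.eventually (eventually_gt_nhds hclim)
    filter_upwards [h8, hφpos] with φ h hφ0
    by_contra hcon
    push_neg at hcon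
    have : ((((1/2:ℝ):ℂ)) * (lam gv ρv φ + csqrt (Q φ))).re/φ^2 ≤ 0 :=
      div_nonpos_of_nonpos_of_nonneg hcon (by positivity)
    linarith
  -- conclude
  have hset : {φ : ℝ | 0 < ((((1/2:ℝ):ℂ)) * (lam gv ρv φ + csqrt (Q φ))).re} ∈ L := hevpos
  rw [hLdef, mem_nhdsGT_iff_exists_Ioo_subset] at hset
  obtain ⟨u, hu, hsub⟩ := hset
  refine ⟨u, hu, fun φ hφ0 hφu => ?_⟩
  refine ⟨(((1/2:ℝ):ℂ)) * (lam gv ρv φ + csqrt (Q φ)), ?_, hsub ⟨hφ0, hφu⟩⟩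
  have hq : (csqrt (Q φ))^2 = (lam gv ρv φ)^2 + 4*lam gx ρx φ := by
    rw [csqrt_sq]; simp only [hQ]
  push_cast
  linear_combination hq/4
end
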